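/- Let (Ω, μ) be a probability space and (A_i)_{i∈ℕ} a sequence of measurable sets with Σ_{i=1}^∞ μ(A_i) = ∞. Then μ(limsup_{n→∞} A_n) ≥ limsup_{n→∞} (Σ_{s=1}^n μ(A_s))² / (Σ_{s,t=1}^n μ(A_s ∩ A_t)). -/

import Mathlib

open MeasureTheory Filter
open scoped ENNReal Topology

private lemma rpow_half_sq (x : ℝ≥0∞) : (x ^ (1/2 : ℝ)) ^ 2 = x := by
  rw [← ENNReal.rpow_natCast (x ^ (1/2 : ℝ)) 2, ← ENNReal.rpow_mul]
  norm_num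

/-- Cauchy–Schwarz for indicator sums. -/
private lemma cs_aux {Ω : Type*} [MeasurableSpace Ω] (μ : Measure Ω)
    (A : ℕ → Set Ω) (hA : ∀ i, MeasurableSet (A i)) (s : Finset ℕ) :
    (∑ i ∈ s, μ (A i)) ^ 2 ≤
      (∑ i ∈ s, ∑ j ∈ s, μ (A i ∩ A j)) * μ (⋃ i ∈ s, A i) := by
  set X : Ω → ℝ≥0∞ := fun ω => ∑ i ∈ s, (A i).indicator 1 ω with hXdef
  have hXm : ∀ i ∈ s, Measurable fun ω => (A i).indicator (1 : Ω → ℝ≥0∞) ω :=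
    fun i _ => measurable_one.indicator (hA i)
  have hX : Measurable X := Finset.measurable_sum s hXm
  set U : Set Ω := ⋃ i ∈ s, A i with hUdef
  have hU : MeasurableSet U := s.measurableSet_biUnion fun i _ => hA i
  set g : Ω → ℝ≥0∞ := U.indicator 1 with hgdef
  have hg : Measurable g := measurable_one.indicator hU
  have h1 : ∫⁻ ω, X ω ∂μ = ∑ i ∈ s, μ (A i) := by
    rw [lintegral_finset_sum s hXm]
    exact Finset.sum_congr rfl fun i _ => lintegral_indicator_one (hA i)
  have h2 : ∫⁻ ω, X ω ^ (2 : ℝ) ∂μ = ∑ i ∈ s, ∑ j ∈ s, μ (A i ∩ A j) := by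
    have hXsq : ∀ ω, X ω ^ (2 : ℝ) =
        ∑ i ∈ s, ∑ j ∈ s, (A i ∩ A j).indicator (1 : Ω → ℝ≥0∞) ω := by
      intro ω
      rw [ENNReal.rpow_two, sq, hXdef, Finset.sum_mul_sum]
      refine Finset.sum_congr rfl fun i _ => Finset.sum_congr rfl fun j _ => ?_
      rw [Set.inter_indicator_one]
      rfl
    calc ∫⁻ ω, X ω ^ (2 : ℝ) ∂μ
        = ∫⁻ ω, ∑ i ∈ s, ∑ j ∈ s, (A i ∩ A j).indicator (1 : Ω → ℝ≥0∞) ω ∂μ :=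
          lintegral_congr hXsq
      _ = ∑ i ∈ s, ∑ j ∈ s, μ (A i ∩ A j) := by
          rw [lintegral_finset_sum s (fun i _ => Finset.measurable_sum s
            (fun j _ => measurable_one.indicator ((hA i).inter (hA j))))]
          refine Finset.sum_congr rfl fun i _ => ?_
          rw [lintegral_finset_sum s
            (fun j _ => measurable_one.indicator ((hA i).inter (hA j)))]
          exact Finset.sum_congr rfl fun j _ => lintegral_indicator_one ((hA i).inter (hA j))
  have hmulU : ∀ ω, (X * g) ω = X ω := by
    intro ω
    by_cases hω : ω ∈ U
    · simp [hgdef, Set.indicator_of_mem hω]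
    · have hz : X ω = 0 := by
        refine Finset.sum_eq_zero fun i hi => ?_
        exact Set.indicator_of_notMem (fun hmem => hω (Set.mem_biUnion hi hmem)) _
      simp [hz]
  have hgsq : ∀ ω, g ω ^ (2 : ℝ) = g ω := by
    intro ω
    by_cases hω : ω ∈ U
    · rw [hgdef, Set.indicator_of_mem hω, Pi.one_apply, ENNReal.one_rpow]
    · rw [hgdef, Set.indicator_of_notMem hω, ENNReal.zero_rpow_of_pos (by norm_num)]
  have hpq : Real.HolderConjugate 2 2 := ⟨by norm_num, by norm_num, by norm_num⟩
  have holder := ENNReal.lintegral_mul_le_Lp_mul_Lq μ hpq hX.aemeasurable hg.aemeasurable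
  rw [lintegral_congr hmulU] at holder
  simp only [hgsq] at holder
  rw [hgdef, lintegral_indicator_one hU, h1, h2] at holder
  calc (∑ i ∈ s, μ (A i)) ^ 2
      ≤ ((∑ i ∈ s, ∑ j ∈ s, μ (A i ∩ A j)) ^ (1/2 : ℝ) * μ U ^ (1/2 : ℝ)) ^ 2 := by
        gcongr
    _ = (∑ i ∈ s, ∑ j ∈ s, μ (A i ∩ A j)) * μ U := by
        rw [mul_pow, rpow_half_sq, rpow_half_sq]

theorem stmt_9 {Ω : Type*} [MeasurableSpace Ω] (μ : Measure Ω)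
    [IsProbabilityMeasure μ]
    (A : ℕ → Set Ω) (hA : ∀ i, MeasurableSet (A i))
    (hdiv : ∑' i : ℕ, μ (A (i + 1)) = ⊤) :
    limsup (fun n =>
        (∑ s ∈ Finset.Icc 1 n, μ (A s)) ^ 2 /
          ∑ s ∈ Finset.Icc 1 n, ∑ t ∈ Finset.Icc 1 n, μ (A s ∩ A t)) atTop ≤
      μ (limsup A atTop) := by
  set F : ℕ → ℕ → ℝ≥0∞ := fun m n => ∑ s ∈ Finset.Icc m n, μ (A s) with hF
  set G : ℕ → ℕ → ℝ≥0∞ := fun m n => ∑ s ∈ Finset.Icc m n, ∑ t ∈ Finset.Icc m n, μ (A s ∩ A t)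
    with hG
  set r : ℕ → ℝ≥0∞ := fun n => F 1 n ^ 2 / G 1 n with hr
  set B : ℕ → Set Ω := fun m => ⋃ i, ⋃ (_ : m ≤ i), A i with hB
  have hBmono : Antitone B :=
    fun i j hij => Set.biUnion_subset_biUnion_left fun k hk => le_trans hij hk
  -- the measure of limsup A is the infimum of μ (B m)
  have hlim : μ (limsup A atTop) = ⨅ m, μ (B m) := by
    rw [limsup_eq_iInf_iSup_of_nat]
    have hset : (⨅ n : ℕ, ⨆ i ≥ n, A i) = ⋂ n, B n := by
      simp only [hB, Set.iInf_eq_iInter, Set.iSup_eq_iUnion, ge_iff_le]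
    rw [hset]
    exact hBmono.measure_iInter
      (fun i => (MeasurableSet.biUnion (Set.to_countable _) fun k _ => hA k).nullMeasurableSet)
      ⟨0, measure_ne_top μ _⟩
  -- F 1 n tends to ⊤
  have hFr : ∀ n, F 1 n = ∑ i ∈ Finset.range n, μ (A (i + 1)) := by
    intro n
    show ∑ s ∈ Finset.Icc 1 n, μ (A s) = _
    rw [← Finset.Ico_add_one_right_eq_Icc, Finset.sum_Ico_eq_sum_range]
    simp [add_comm]
  have htop : Tendsto (fun n => F 1 n) atTop (𝓝 ⊤) := by
    simp only [hFr]
    rw [← hdiv]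
    exact ENNReal.tendsto_nat_tsum _
  -- key claim
  have key : ∀ m, 1 ≤ m → limsup r atTop ≤ μ (B m) := by
    intro m hm
    refine ENNReal.le_of_forall_lt_one_mul_le fun a ha => ?_
    rcases eq_or_ne a 0 with rfl | ha0
    · simp
    set b : ℝ≥0∞ := a ^ (1/2 : ℝ) with hb
    have hb1 : b < 1 := ENNReal.rpow_lt_one ha (by norm_num)
    have hbsq : b ^ 2 = a := rpow_half_sq a
    have h1b0 : (1 : ℝ≥0∞) - b ≠ 0 := (tsub_pos_of_lt hb1).ne'
    have hC : F 1 m ≠ ⊤ :=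
      (ENNReal.sum_lt_top.2 fun i _ => measure_lt_top μ _).ne
    have hKlt : F 1 m / (1 - b) < ⊤ := ENNReal.div_lt_top hC h1b0
    have hev : ∀ᶠ n in atTop, F 1 m / (1 - b) < F 1 n := htop.eventually (lt_mem_nhds hKlt)
    have hpt : ∀ n, F 1 m / (1 - b) < F 1 n → a * r n ≤ μ (B m) := by
      intro n hn
      have hsplit : F 1 n ≤ F 1 m + F m n := by
        refine le_trans (Finset.sum_le_sum_of_subset (fun x hx => ?_))
          (le_trans le_self_add (le_of_eq Finset.sum_union_inter))
        simp only [Finset.mem_Icc, Finset.mem_union] at hx ⊢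
        rcases le_total x m with h | h
        · exact Or.inl ⟨hx.1, h⟩
        · exact Or.inr ⟨h, hx.2⟩
      have hCle : F 1 m ≤ (1 - b) * F 1 n := by
        calc F 1 m = F 1 m / (1 - b) * (1 - b) :=
              (ENNReal.div_mul_cancel h1b0
                (lt_of_le_of_lt tsub_le_self ENNReal.one_lt_top).ne).symm
          _ ≤ F 1 n * (1 - b) := by gcongr
          _ = (1 - b) * F 1 n := mul_comm _ _
      have h2 : b * F 1 n ≤ F m n := by
        have hadd : b * F 1 n + F 1 m ≤ F 1 n := by
          calc b * F 1 n + F 1 m ≤ b * F 1 n + (1 - b) * F 1 n := by gcongr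
            _ = (b + (1 - b)) * F 1 n := (add_mul _ _ _).symm
            _ = F 1 n := by rw [add_tsub_cancel_of_le hb1.le, one_mul]
        exact le_trans (ENNReal.le_sub_of_add_le_right hC hadd) (tsub_le_iff_left.2 hsplit)
      have h3 : G m n ≤ G 1 n := by
        have hsub : Finset.Icc m n ⊆ Finset.Icc 1 n := Finset.Icc_subset_Icc hm le_rfl
        calc G m n ≤ ∑ s ∈ Finset.Icc m n, ∑ t ∈ Finset.Icc 1 n, μ (A s ∩ A t) :=
              Finset.sum_le_sum fun s _ => Finset.sum_le_sum_of_subset hsub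
          _ ≤ G 1 n := Finset.sum_le_sum_of_subset hsub
      have hcs : F m n ^ 2 ≤ μ (⋃ i ∈ Finset.Icc m n, A i) * G m n := by
        rw [mul_comm]
        exact cs_aux μ A hA _
      have hUB : (⋃ i ∈ Finset.Icc m n, A i) ⊆ B m :=
        Set.iUnion₂_subset fun i hi => Set.subset_biUnion_of_mem (Finset.mem_Icc.1 hi).1
      calc a * r n = (b * F 1 n) ^ 2 / G 1 n := by
            simp only [hr]
            rw [mul_pow, hbsq, mul_div_assoc]
        _ ≤ F m n ^ 2 / G 1 n := by gcongr
        _ ≤ F m n ^ 2 / G m n := ENNReal.div_le_div_left h3 _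
        _ ≤ μ (⋃ i ∈ Finset.Icc m n, A i) := ENNReal.div_le_of_le_mul hcs
        _ ≤ μ (B m) := measure_mono hUB
    have hev2 : ∀ᶠ n in atTop, a * r n ≤ μ (B m) := hev.mono hpt
    have hlimsup : limsup (fun n => a * r n) atTop ≤ μ (B m) :=
      limsup_le_of_le (by isBoundedDefault) hev2
    rwa [ENNReal.limsup_const_mul_of_ne_top (ha.trans_le le_top).ne] at hlimsup
  rw [hlim]
  refine le_iInf fun m => ?_
  rcases Nat.eq_zero_or_pos m with rfl | hm
  · exact (key 1 le_rfl).trans (measure_mono (hBmono (Nat.zero_le 1)))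
  · exact key m hm
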